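/- arXiv:1310.6534 — 2 statements merged into one kernel-verified Lean document; each statement's English description precedes it below -/
import Mathlib

section
/- Let K_n be the rectangle conv{(±n,0),(±n,1)} for n ∈ ℕ. Then ((D(K_n)-1)/D(K_n))(p(K_n) - 2D(K_n)) = (2√(n²+1/4) - 1)/(2√(n²+1/4)) · (4n + 2 - 4√(n²+1/4)), and this quantity tends to 2 as n → ∞. -/
open MeasureTheory Metric Set Filter
open scoped Topology RealInnerProductSpace

noncomputable def perim (K : Set (EuclideanSpace ℝ (Fin 2))) : ℝ :=
  (μH[1] (frontier K)).toReal

noncomputable def circum (K : Set (EuclideanSpace ℝ (Fin 2))) : ℝ :=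
  sInf {r : ℝ | ∃ c, K ⊆ Metric.closedBall c r}

noncomputable def inrad (K : Set (EuclideanSpace ℝ (Fin 2))) : ℝ :=
  sSup {r : ℝ | ∃ c, Metric.closedBall c r ⊆ K}

noncomputable def minWidth (K : Set (EuclideanSpace ℝ (Fin 2))) : ℝ :=
  sInf {w : ℝ | ∃ u : EuclideanSpace ℝ (Fin 2), ‖u‖ = 1 ∧
    w = sSup ((fun x => ⟪u, x⟫) '' K) - sInf ((fun x => ⟪u, x⟫) '' K)}

def LatticeFree (K : Set (EuclideanSpace ℝ (Fin 2))) : Prop :=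
  ∀ m n : ℤ, (WithLp.toLp 2 ![(m : ℝ), (n : ℝ)] : EuclideanSpace ℝ (Fin 2)) ∉ interior K

def Unconditional (K : Set (EuclideanSpace ℝ (Fin 2))) (z : EuclideanSpace ℝ (Fin 2)) : Prop :=
  (∀ x ∈ K, (WithLp.toLp 2 ![x 0, 2 * z 1 - x 1] : EuclideanSpace ℝ (Fin 2)) ∈ K) ∧
  (∀ x ∈ K, (WithLp.toLp 2 ![2 * z 0 - x 0, x 1] : EuclideanSpace ℝ (Fin 2)) ∈ K)

/-! ### Auxiliary definitions and lemmas -/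

noncomputable def pt (a b : ℝ) : EuclideanSpace ℝ (Fin 2) := WithLp.toLp 2 ![a, b]

@[simp] lemma pt0 (a b : ℝ) : pt a b 0 = a := rfl
@[simp] lemma pt1 (a b : ℝ) : pt a b 1 = b := rfl

lemma eqpt {x : EuclideanSpace ℝ (Fin 2)} {a b : ℝ} (h0 : x 0 = a) (h1 : x 1 = b) :
    x = pt a b := by
  ext i
  fin_cases i
  · exact h0
  · exact h1

lemma dist_pt (a b c d : ℝ) : dist (pt a b) (pt c d) = Real.sqrt ((a - c) ^ 2 + (b - d) ^ 2) := by
  rw [EuclideanSpace.dist_eq]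
  simp [Fin.sum_univ_two, Real.dist_eq, sq_abs]

lemma seg_h (r y : ℝ) (hr : 0 < r) :
    segment ℝ (pt (-r) y) (pt r y) =
      {x : EuclideanSpace ℝ (Fin 2) | x 0 ∈ Icc (-r) r ∧ x 1 = y} := by
  rw [segment_eq_image]
  ext x
  constructor
  · rintro ⟨t, ⟨ht0, ht1⟩, rfl⟩
    refine ⟨⟨?_, ?_⟩, ?_⟩ <;>
      simp [PiLp.add_apply, PiLp.smul_apply, smul_eq_mul] <;> nlinarith
  · rintro ⟨⟨h1, h2⟩, h3⟩
    refine ⟨(x 0 + r) / (2 * r),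
      ⟨div_nonneg (by linarith) (by positivity), by rw [div_le_one (by positivity)]; linarith⟩, ?_⟩
    ext i
    fin_cases i <;>
      simp [PiLp.add_apply, PiLp.smul_apply, smul_eq_mul, h3] <;> field_simp <;> ring

lemma seg_v (s : ℝ) :
    segment ℝ (pt s 0) (pt s 1) =
      {x : EuclideanSpace ℝ (Fin 2) | x 0 = s ∧ x 1 ∈ Icc (0 : ℝ) 1} := by
  rw [segment_eq_image]
  ext x
  constructor
  · rintro ⟨t, ⟨ht0, ht1⟩, rfl⟩
    refine ⟨?_, ?_, ?_⟩ <;>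
      simp [PiLp.add_apply, PiLp.smul_apply, smul_eq_mul] <;> nlinarith
  · rintro ⟨h1, h2, h3⟩
    refine ⟨x 1, ⟨h2, h3⟩, ?_⟩
    ext i
    fin_cases i <;> simp [PiLp.add_apply, PiLp.smul_apply, smul_eq_mul, h1] <;> ring

lemma interior_rect (r : ℝ) :
    interior {x : EuclideanSpace ℝ (Fin 2) | x 0 ∈ Icc (-r) r ∧ x 1 ∈ Icc (0 : ℝ) 1}
      = {x | x 0 ∈ Ioo (-r) r ∧ x 1 ∈ Ioo (0 : ℝ) 1} := by
  have : {x : EuclideanSpace ℝ (Fin 2) | x 0 ∈ Icc (-r) r ∧ x 1 ∈ Icc (0 : ℝ) 1}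
      = (fun x : EuclideanSpace ℝ (Fin 2) => x 0) ⁻¹' Icc (-r) r ∩
        (fun x : EuclideanSpace ℝ (Fin 2) => x 1) ⁻¹' Icc 0 1 := rfl
  rw [this, interior_inter,
    ← (PiLp.isOpenMap_apply (p := 2) (β := fun _ : Fin 2 => ℝ) 0).preimage_interior_eq_interior_preimage (PiLp.continuous_apply (p := 2) (β := fun _ : Fin 2 => ℝ) 0),
    ← (PiLp.isOpenMap_apply (p := 2) (β := fun _ : Fin 2 => ℝ) 1).preimage_interior_eq_interior_preimage (PiLp.continuous_apply (p := 2) (β := fun _ : Fin 2 => ℝ) 1),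
    interior_Icc, interior_Icc]
  rfl

lemma closed_rect (r : ℝ) :
    IsClosed {x : EuclideanSpace ℝ (Fin 2) | x 0 ∈ Icc (-r) r ∧ x 1 ∈ Icc (0 : ℝ) 1} :=
  (isClosed_Icc.preimage (PiLp.continuous_apply (p := 2) (β := fun _ : Fin 2 => ℝ) 0)).inter (isClosed_Icc.preimage (PiLp.continuous_apply (p := 2) (β := fun _ : Fin 2 => ℝ) 1))

lemma frontier_rect (r : ℝ) (hr : 0 < r) :
    frontier {x : EuclideanSpace ℝ (Fin 2) | x 0 ∈ Icc (-r) r ∧ x 1 ∈ Icc (0 : ℝ) 1}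
      = segment ℝ (pt (-r) 0) (pt r 0) ∪
        (segment ℝ (pt (-r) 1) (pt r 1) ∪
          (segment ℝ (pt (-r) 0) (pt (-r) 1) ∪ segment ℝ (pt r 0) (pt r 1))) := by
  rw [(closed_rect r).frontier_eq, interior_rect, seg_h r 0 hr, seg_h r 1 hr, seg_v (-r), seg_v r]
  ext x
  simp only [mem_diff, mem_setOf_eq, mem_Icc, mem_Ioo, mem_union, not_and, not_lt]
  constructor
  · rintro ⟨⟨⟨h1, h2⟩, h3, h4⟩, h5⟩
    by_cases e1 : x 1 = 0
    · exact Or.inl ⟨⟨h1, h2⟩, e1⟩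
    by_cases e2 : x 1 = 1
    · exact Or.inr (Or.inl ⟨⟨h1, h2⟩, e2⟩)
    by_cases e3 : x 0 = -r
    · exact Or.inr (Or.inr (Or.inl ⟨e3, h3, h4⟩))
    by_cases e4 : x 0 = r
    · exact Or.inr (Or.inr (Or.inr ⟨e4, h3, h4⟩))
    · exfalso
      have := h5 ⟨lt_of_le_of_ne h1 (Ne.symm e3), lt_of_le_of_ne h2 e4⟩
        (lt_of_le_of_ne h3 (Ne.symm e1))
      exact e2 (le_antisymm h4 this)
  · rintro (⟨⟨h1, h2⟩, h3⟩ | ⟨⟨h1, h2⟩, h3⟩ | ⟨h1, h2, h3⟩ | ⟨h1, h2, h3⟩)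
    · exact ⟨⟨⟨h1, h2⟩, by rw [h3]; constructor <;> norm_num⟩, fun _ h => absurd h3 (by linarith)⟩
    · exact ⟨⟨⟨h1, h2⟩, by rw [h3]; constructor <;> norm_num⟩,
        fun _ h => by rw [h3]⟩
    · exact ⟨⟨⟨by rw [h1], by rw [h1]; linarith⟩, h2, h3⟩,
        fun h _ => absurd h1 (by linarith [h.1])⟩
    · exact ⟨⟨⟨by rw [h1]; linarith, by rw [h1]⟩, h2, h3⟩,
        fun h _ => absurd h1 (by linarith [h.2])⟩

lemma meas_seg (a b : EuclideanSpace ℝ (Fin 2)) : MeasurableSet (segment ℝ a b) := by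
  rw [segment_eq_image]
  exact (isCompact_Icc.image (by continuity)).isClosed.measurableSet

lemma hm_seg (a b : EuclideanSpace ℝ (Fin 2)) :
    μH[1] (segment ℝ a b) = ENNReal.ofReal (dist a b) := by
  rw [hausdorffMeasure_segment a b, edist_dist]

lemma perim_rect (r : ℝ) (hr : 0 < r) :
    perim {x : EuclideanSpace ℝ (Fin 2) | x 0 ∈ Icc (-r) r ∧ x 1 ∈ Icc (0 : ℝ) 1}
      = 4 * r + 2 := by
  haveI : NullSingletonClass (μH[1] : Measure (EuclideanSpace ℝ (Fin 2))) :=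
    Measure.nullSingletonClass_hausdorff (EuclideanSpace ℝ (Fin 2)) one_pos
  have hC : μH[1] ({pt (-r) 0, pt r 0, pt (-r) 1, pt r 1} :
      Set (EuclideanSpace ℝ (Fin 2))) = 0 := Set.Finite.measure_zero (Set.toFinite _) _
  set S1 := segment ℝ (pt (-r) 0) (pt r 0) with hS1
  set S2 := segment ℝ (pt (-r) 1) (pt r 1) with hS2
  set S3 := segment ℝ (pt (-r) 0) (pt (-r) 1) with hS3
  set S4 := segment ℝ (pt r 0) (pt r 1) with hS4
  have hrne : -r ≠ r := by intro h; linarith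
  have d34 : AEDisjoint μH[1] S3 S4 := by
    refine measure_mono_null ?_ hC
    rw [hS3, hS4, seg_v, seg_v]
    rintro x ⟨⟨h1, _⟩, ⟨h2, _⟩⟩
    exact absurd (h1 ▸ h2) hrne
  have d2 : AEDisjoint μH[1] S2 (S3 ∪ S4) := by
    refine measure_mono_null ?_ hC
    rw [hS2, hS3, hS4, seg_h r 1 hr, seg_v, seg_v]
    rintro x ⟨⟨_, h1⟩, (⟨h2, _⟩ | ⟨h2, _⟩)⟩
    · exact Or.inr (Or.inr (Or.inl (eqpt h2 h1)))
    · exact Or.inr (Or.inr (Or.inr (eqpt h2 h1)))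
  have d1 : AEDisjoint μH[1] S1 (S2 ∪ (S3 ∪ S4)) := by
    refine measure_mono_null ?_ hC
    rw [hS1, hS2, hS3, hS4, seg_h r 0 hr, seg_h r 1 hr, seg_v, seg_v]
    rintro x ⟨⟨_, h1⟩, (⟨_, h2⟩ | ⟨h2, _⟩ | ⟨h2, _⟩)⟩
    · exact absurd (h1 ▸ h2).symm one_ne_zero
    · exact Or.inl (eqpt h2 h1)
    · exact Or.inr (Or.inl (eqpt h2 h1))
  rw [perim, frontier_rect r hr, ← hS1, ← hS2, ← hS3, ← hS4,
    measure_union₀ (((meas_seg _ _).union ((meas_seg _ _).union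
      (meas_seg _ _))).nullMeasurableSet) d1,
    measure_union₀ (((meas_seg _ _).union (meas_seg _ _)).nullMeasurableSet) d2,
    measure_union₀ ((meas_seg _ _).nullMeasurableSet) d34,
    hm_seg, hm_seg, hm_seg, hm_seg, dist_pt, dist_pt, dist_pt, dist_pt]
  have h2r : Real.sqrt ((-r - r) ^ 2 + ((0 : ℝ) - 0) ^ 2) = 2 * r := by
    rw [show (-r - r) ^ 2 + ((0 : ℝ) - 0) ^ 2 = (2 * r) ^ 2 by ring, Real.sqrt_sq (by linarith)]
  have h2r' : Real.sqrt ((-r - r) ^ 2 + ((1 : ℝ) - 1) ^ 2) = 2 * r := by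
    rw [show (-r - r) ^ 2 + ((1 : ℝ) - 1) ^ 2 = (2 * r) ^ 2 by ring, Real.sqrt_sq (by linarith)]
  have h1 : Real.sqrt ((-r - -r) ^ 2 + ((0 : ℝ) - 1) ^ 2) = 1 := by
    rw [show (-r - -r) ^ 2 + ((0 : ℝ) - 1) ^ 2 = 1 by ring, Real.sqrt_one]
  have h1' : Real.sqrt ((r - r) ^ 2 + ((0 : ℝ) - 1) ^ 2) = 1 := by
    rw [show (r - r) ^ 2 + ((0 : ℝ) - 1) ^ 2 = 1 by ring, Real.sqrt_one]
  rw [h2r, h2r', h1, h1', ← ENNReal.ofReal_add (by norm_num) (by norm_num),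
    ← ENNReal.ofReal_add (by linarith) (by norm_num),
    ← ENNReal.ofReal_add (by linarith) (by linarith),
    ENNReal.toReal_ofReal (by linarith)]
  ring

lemma diam_rect (r : ℝ) (hr : 0 ≤ r) :
    Metric.diam {x : EuclideanSpace ℝ (Fin 2) | x 0 ∈ Icc (-r) r ∧ x 1 ∈ Icc (0 : ℝ) 1}
      = Real.sqrt (4 * r ^ 2 + 1) := by
  apply le_antisymm
  · apply Metric.diam_le_of_forall_dist_le (Real.sqrt_nonneg _)
    rintro x ⟨⟨hx1, hx2⟩, hx3, hx4⟩ y ⟨⟨hy1, hy2⟩, hy3, hy4⟩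
    rw [EuclideanSpace.dist_eq]
    apply Real.sqrt_le_sqrt
    simp only [Fin.sum_univ_two, Real.dist_eq, sq_abs]
    nlinarith
  · have hb : Bornology.IsBounded {x : EuclideanSpace ℝ (Fin 2) | x 0 ∈ Icc (-r) r ∧ x 1 ∈ Icc (0 : ℝ) 1} := by
      apply Metric.isBounded_iff_subset_closedBall (pt 0 0) |>.2
      refine ⟨Real.sqrt (r ^ 2 + 1), fun x ⟨⟨h1, h2⟩, h3, h4⟩ => ?_⟩
      rw [mem_closedBall, EuclideanSpace.dist_eq]
      apply Real.sqrt_le_sqrt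
      simp only [Fin.sum_univ_two, Real.dist_eq, sq_abs, pt0, pt1]
      nlinarith
    have hmem1 : pt (-r) 0 ∈ {x : EuclideanSpace ℝ (Fin 2) |
        x 0 ∈ Icc (-r) r ∧ x 1 ∈ Icc (0 : ℝ) 1} := by
      constructor <;> constructor <;> simp <;> linarith
    have hmem2 : pt r 1 ∈ {x : EuclideanSpace ℝ (Fin 2) |
        x 0 ∈ Icc (-r) r ∧ x 1 ∈ Icc (0 : ℝ) 1} := by
      constructor <;> constructor <;> simp <;> linarith
    have := Metric.dist_le_diam_of_mem hb hmem1 hmem2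
    rwa [dist_pt, show (-r - r) ^ 2 + ((0 : ℝ) - 1) ^ 2 = 4 * r ^ 2 + 1 by ring] at this

theorem stmt_7 (K : ℕ → Set (EuclideanSpace ℝ (Fin 2)))
    (hK : ∀ n, K n = {x | x 0 ∈ Icc (-(n : ℝ)) (n : ℝ) ∧ x 1 ∈ Icc (0 : ℝ) 1}) :
    (∀ n : ℕ, 1 ≤ n →
      (Metric.diam (K n) - 1) / Metric.diam (K n) *
          (perim (K n) - 2 * Metric.diam (K n)) =
        (2 * Real.sqrt ((n : ℝ) ^ 2 + 1 / 4) - 1) / (2 * Real.sqrt ((n : ℝ) ^ 2 + 1 / 4)) *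
          (4 * (n : ℝ) + 2 - 4 * Real.sqrt ((n : ℝ) ^ 2 + 1 / 4))) ∧
    Tendsto (fun n : ℕ =>
        (Metric.diam (K n) - 1) / Metric.diam (K n) *
          (perim (K n) - 2 * Metric.diam (K n))) atTop (𝓝 2) := by
  have hdiam : ∀ n : ℕ, Metric.diam (K n) = Real.sqrt (4 * (n : ℝ) ^ 2 + 1) := by
    intro n
    rw [hK n]
    exact diam_rect _ (Nat.cast_nonneg n)
  have hperim : ∀ n : ℕ, 1 ≤ n → perim (K n) = 4 * (n : ℝ) + 2 := by
    intro n hn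
    rw [hK n]
    exact perim_rect _ (by exact_mod_cast hn)
  have hsq : ∀ n : ℕ, Real.sqrt (4 * (n : ℝ) ^ 2 + 1) = 2 * Real.sqrt ((n : ℝ) ^ 2 + 1 / 4) := by
    intro n
    rw [show (4 * (n : ℝ) ^ 2 + 1) = 2 ^ 2 * ((n : ℝ) ^ 2 + 1 / 4) by ring,
      Real.sqrt_mul (by positivity), Real.sqrt_sq (by norm_num)]
  constructor
  · intro n hn
    rw [hdiam n, hperim n hn, hsq n]
    ring_nf
  · -- the limit
    set D : ℕ → ℝ := fun n => Real.sqrt (4 * (n : ℝ) ^ 2 + 1) with hD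
    have hD1 : ∀ n, 1 ≤ D n := by
      intro n
      rw [hD]
      nlinarith [Real.sq_sqrt (show (0:ℝ) ≤ 4 * (n:ℝ) ^ 2 + 1 by positivity),
        Real.sqrt_nonneg (4 * (n:ℝ) ^ 2 + 1)]
    have hDpos : ∀ n, 0 < D n := fun n => lt_of_lt_of_le one_pos (hD1 n)
    have hDn : ∀ n : ℕ, (n : ℝ) ≤ D n := by
      intro n
      rw [hD]
      rw [show ((n : ℝ)) = Real.sqrt ((n : ℝ) ^ 2) by rw [Real.sqrt_sq (Nat.cast_nonneg n)]]
      exact Real.sqrt_le_sqrt (by nlinarith)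
    have hDtop : Tendsto D atTop atTop :=
      tendsto_atTop_mono hDn tendsto_natCast_atTop_atTop
    have hA : Tendsto (fun n : ℕ => (D n - 1) / D n) atTop (𝓝 1) := by
      have : Tendsto (fun n : ℕ => 1 - (D n)⁻¹) atTop (𝓝 (1 - 0)) :=
        tendsto_const_nhds.sub (tendsto_inv_atTop_zero.comp hDtop)
      rw [sub_zero] at this
      refine this.congr fun n => ?_
      rw [sub_div, div_self (hDpos n).ne', one_div]
    have hB : Tendsto (fun n : ℕ => 4 * (n : ℝ) + 2 - 2 * D n) atTop (𝓝 2) := by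
      have hlow : Tendsto (fun n : ℕ => 2 - 1 / (n : ℝ)) atTop (𝓝 (2 - 0)) :=
        tendsto_const_nhds.sub tendsto_one_div_atTop_nhds_zero_nat
      rw [sub_zero] at hlow
      refine tendsto_of_tendsto_of_tendsto_of_le_of_le' hlow tendsto_const_nhds ?_ ?_
      · filter_upwards [eventually_ge_atTop 1] with n hn
        have hn1 : (1 : ℝ) ≤ (n : ℝ) := by exact_mod_cast hn
        have hup : D n ≤ 2 * n + 1 / (2 * n) := by
          rw [hD]
          rw [show (2 * (n : ℝ) + 1 / (2 * n)) =
            Real.sqrt ((2 * (n : ℝ) + 1 / (2 * n)) ^ 2) by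
              rw [Real.sqrt_sq (by positivity)]]
          apply Real.sqrt_le_sqrt
          have h2n : (0 : ℝ) < 2 * n := by linarith
          rw [add_sq]
          have : (1 / (2 * (n : ℝ))) ^ 2 ≥ 0 := by positivity
          have h22 : 2 * (2 * (n : ℝ)) * (1 / (2 * n)) = 2 := by field_simp
          nlinarith
        have : 2 * D n ≤ 4 * n + 1 / n := by
          rw [show (4 : ℝ) * n + 1 / n = 2 * (2 * n + 1 / (2 * n)) by field_simp; ring]
          linarith
        linarith
      · filter_upwards with n
        have : 2 * (n : ℝ) ≤ D n := by
          rw [hD]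
          rw [show (2 * (n : ℝ)) = Real.sqrt ((2 * (n : ℝ)) ^ 2) by
            rw [Real.sqrt_sq (by positivity)]]
          exact Real.sqrt_le_sqrt (by nlinarith)
        linarith
    have hAB : Tendsto (fun n : ℕ => (D n - 1) / D n * (4 * (n : ℝ) + 2 - 2 * D n))
        atTop (𝓝 2) := by
      have := hA.mul hB
      rwa [one_mul] at this
    refine hAB.congr' ?_
    filter_upwards [eventually_ge_atTop 1] with n hn
    rw [hdiam n, hperim n hn]
end

section
/- For real numbers n ≥ 1, the sequence a_n = ((√(4n²+1) - 1)/√(4n²+1)) · (4n + 2 - 2√(4n²+1)) is strictly less than 2, and a_n → 2 as n → ∞. -/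
open MeasureTheory Metric Set Filter
open scoped Topology RealInnerProductSpace

theorem stmt_8 :
    (∀ n : ℝ, 1 ≤ n →
      (Real.sqrt (4 * n ^ 2 + 1) - 1) / Real.sqrt (4 * n ^ 2 + 1) *
        (4 * n + 2 - 2 * Real.sqrt (4 * n ^ 2 + 1)) < 2) ∧
    Tendsto (fun n : ℝ =>
      (Real.sqrt (4 * n ^ 2 + 1) - 1) / Real.sqrt (4 * n ^ 2 + 1) *
        (4 * n + 2 - 2 * Real.sqrt (4 * n ^ 2 + 1))) atTop (𝓝 2) := by
  constructor
  · intro n hn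
    set s := Real.sqrt (4 * n ^ 2 + 1) with hs
    have hs2 : s ^ 2 = 4 * n ^ 2 + 1 := Real.sq_sqrt (by nlinarith)
    have hs1 : 1 ≤ s := by nlinarith [Real.sqrt_nonneg (4 * n ^ 2 + 1)]
    have hlt : s < 2 * n + 1 := by nlinarith [Real.sqrt_nonneg (4 * n ^ 2 + 1)]
    have hgt : 2 * n < s := by nlinarith [Real.sqrt_nonneg (4 * n ^ 2 + 1)]
    rw [div_mul_eq_mul_div, div_lt_iff₀ (by linarith)]
    nlinarith
  ·
    have h4 : Real.sqrt 4 = 2 := by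
      rw [show (4:ℝ) = 2^2 by norm_num, Real.sqrt_sq (by norm_num)]
    have hpos : ∀ x : ℝ, 0 < Real.sqrt (4 + x ^ 2) := fun x =>
      Real.sqrt_pos.mpr (by positivity)
    have hF : Tendsto (fun x : ℝ => (1 - x / Real.sqrt (4 + x ^ 2)) *
        (8 / (2 + x + Real.sqrt (4 + x ^ 2)))) (𝓝 0) (𝓝 2) := by
      have hc : ContinuousAt (fun x : ℝ => (1 - x / Real.sqrt (4 + x ^ 2)) *
          (8 / (2 + x + Real.sqrt (4 + x ^ 2)))) 0 := by
        have hsq : Continuous (fun x : ℝ => Real.sqrt (4 + x ^ 2)) := by fun_prop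
        apply ContinuousAt.mul
        · exact ContinuousAt.sub continuousAt_const
            (ContinuousAt.div continuousAt_id hsq.continuousAt (hpos 0).ne')
        · apply ContinuousAt.div continuousAt_const (by fun_prop)
          show (2:ℝ) + 0 + Real.sqrt (4 + 0 ^ 2) ≠ 0
          norm_num [h4]
      convert hc.tendsto using 2
      norm_num [h4]
    have hinv : Tendsto (fun n : ℝ => 1 / n) atTop (𝓝 0) := by
      simpa [one_div] using tendsto_inv_atTop_zero
    have hcomp := hF.comp hinv
    apply hcomp.congr'
    filter_upwards [eventually_ge_atTop (1:ℝ)] with n hn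
    have hn0 : (0:ℝ) < n := by linarith
    set s := Real.sqrt (4 * n ^ 2 + 1) with hs
    have hs2 : s ^ 2 = 4 * n ^ 2 + 1 := Real.sq_sqrt (by nlinarith)
    have hs1 : 1 ≤ s := by nlinarith [Real.sqrt_nonneg (4 * n ^ 2 + 1)]
    have hsn : Real.sqrt (4 + (1/n) ^ 2) = s / n := by
      rw [eq_div_iff hn0.ne', ← Real.sqrt_sq hn0.le, ← Real.sqrt_mul (by positivity)]
      congr 1
      field_simp
      rw [Real.sq_sqrt (sq_nonneg n)]
    simp only [Function.comp, hsn]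
    have hden : 0 < 2 + 1/n + s/n := by positivity
    field_simp
    ring_nf
    nlinarith [hs2, hn0, hs1]
end
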